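/- Let k be a field of characteristic 0, S = k[x_0,...,x_n], and let μ ≤ d be positive integers. Let J ⊆ S be a Borel-fixed monomial ideal (i.e., if x_i·m ∈ J for a monomial m, then x_j·m ∈ J for all j > i) such that dim_k(S_d/J_d) = μ. Then J_d + x_0·S_{d−1} = S_d; equivalently, there exists a family B of μ monomials of degree d−1 such that x_0·B is a k-basis of S_d/J_d. -/

import Mathlib

open MvPolynomial

noncomputable section

/-- `S_d`: the `k`-vector space of homogeneous polynomials of degree `d` in
`S = k[x_0, …, x_n]`. -/
def homogComp (n : ℕ) (k : Type*) [CommRing k] (d : ℕ) :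
    Submodule k (MvPolynomial (Fin (n + 1)) k) :=
  homogeneousSubmodule (Fin (n + 1)) k d

/-- The quotient `S_d / J_d` where `J_d = J ∩ S_d`. -/
def quotComp {n : ℕ} {k : Type*} [CommRing k]
    (N : Submodule k (MvPolynomial (Fin (n + 1)) k)) (d : ℕ) :=
  homogComp n k d ⧸ N.comap (homogComp n k d).subtype

instance {n : ℕ} {k : Type*} [CommRing k]
    (N : Submodule k (MvPolynomial (Fin (n + 1)) k)) (d : ℕ) :
    AddCommGroup (quotComp N d) := by unfold quotComp; infer_instance

instance {n : ℕ} {k : Type*} [CommRing k]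
    (N : Submodule k (MvPolynomial (Fin (n + 1)) k)) (d : ℕ) :
    Module k (quotComp N d) := by unfold quotComp; infer_instance

/-- A monomial ideal: an ideal containing, with each element, every monomial occurring
in its support. -/
def IsMonomialIdeal {n : ℕ} {k : Type*} [CommRing k]
    (J : Ideal (MvPolynomial (Fin (n + 1)) k)) : Prop :=
  ∀ f ∈ J, ∀ α ∈ f.support, (monomial α (1 : k)) ∈ J

/-- A monomial ideal `J` is Borel-fixed if whenever `x_i · m ∈ J` for a monomial `m`,
then `x_j · m ∈ J` for every `j > i`. -/
def IsBorelFixed {n : ℕ} {k : Type*} [CommRing k]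
    (J : Ideal (MvPolynomial (Fin (n + 1)) k)) : Prop :=
  ∀ (α : Fin (n + 1) →₀ ℕ) (i j : Fin (n + 1)), i < j →
    X i * monomial α (1 : k) ∈ J → X j * monomial α (1 : k) ∈ J

/-! ### Auxiliary lemmas -/

lemma degAdd {σ : Type*} (a b : σ →₀ ℕ) : (a + b).degree = a.degree + b.degree := by
  rw [Finsupp.degree_eq_weight_one]; exact map_add _ a b

lemma degSingle {σ : Type*} (x : σ) (m : ℕ) : (Finsupp.single x m).degree = m := by
  rw [Finsupp.degree_eq_weight_one]
  simp [Finsupp.weight_apply, Finsupp.sum_single_index]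

lemma subSplit {σ : Type*} {β : σ →₀ ℕ} {i : σ} (h : 1 ≤ β i) :
    (β - Finsupp.single i 1) + Finsupp.single i 1 = β := by
  ext j
  rcases eq_or_ne i j with rfl | hij
  · simp only [Finsupp.add_apply, Finsupp.tsub_apply, Finsupp.single_eq_same]; omega
  · simp [Finsupp.add_apply, Finsupp.tsub_apply, Finsupp.single_eq_of_ne' hij]

lemma borel_step {k : Type*} [CommRing k] {n : ℕ} {J : Ideal (MvPolynomial (Fin (n + 1)) k)}
    (hborel : IsBorelFixed J) {β : Fin (n + 1) →₀ ℕ} {i : Fin (n + 1)}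
    (hi : i ≠ 0) (hβ : 1 ≤ β i) (h : monomial β (1 : k) ∉ J) :
    monomial ((β - Finsupp.single i 1) + Finsupp.single 0 1) (1 : k) ∉ J := by
  intro hmem
  apply h
  have hpos : (0 : Fin (n + 1)) < i := Fin.pos_iff_ne_zero.mpr hi
  have h1 : monomial ((β - Finsupp.single i 1) + Finsupp.single 0 1) (1 : k)
      = X 0 * monomial (β - Finsupp.single i 1) (1 : k) := by
    rw [monomial_add_single, pow_one, mul_comm]
  have h2 := hborel (β - Finsupp.single i 1) 0 i hpos (h1 ▸ hmem)
  rw [← pow_one (X i : MvPolynomial (Fin (n+1)) k), ← monomial_single_add] at h2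
  have h3 : Finsupp.single i 1 + (β - Finsupp.single i 1) = β :=
    (add_comm _ _).trans (subSplit hβ)
  rwa [h3] at h2

/-- From a degree-`d` monomial outside `J` not involving `x_0`, produce, for each `j ≤ d`,
a degree-`d` monomial outside `J` whose `x_0`-exponent is exactly `j`. -/
lemma exists_chain {k : Type*} [CommRing k] {n d : ℕ} {J : Ideal (MvPolynomial (Fin (n + 1)) k)}
    (hborel : IsBorelFixed J) {α : Fin (n + 1) →₀ ℕ}
    (hα : α.degree = d) (h0 : α 0 = 0) (hnot : monomial α (1 : k) ∉ J) :
    ∀ j ≤ d, ∃ β : Fin (n + 1) →₀ ℕ,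
      β.degree = d ∧ β 0 = j ∧ monomial β (1 : k) ∉ J := by
  intro j
  induction j with
  | zero => exact fun _ => ⟨α, hα, h0, hnot⟩
  | succ j ih =>
    intro hj
    obtain ⟨β, hβd, hβ0, hβJ⟩ := ih (Nat.le_of_succ_le hj)
    -- find an index `i ≠ 0` with `β i ≥ 1`
    have hlt : β 0 < d := by omega
    have hex : ∃ i : Fin (n + 1), i ≠ 0 ∧ 1 ≤ β i := by
      by_contra hcon
      push_neg at hcon
      have hsing : β = Finsupp.single 0 (β 0) := by
        ext j
        rcases eq_or_ne j 0 with rfl | hj0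
        · simp
        · rw [Finsupp.single_apply, if_neg (by exact fun h => hj0 h.symm)]
          have := hcon j hj0
          omega
      rw [hsing, degSingle] at hβd
      omega
    obtain ⟨i, hi0, hi1⟩ := hex
    refine ⟨(β - Finsupp.single i 1) + Finsupp.single 0 1, ?_, ?_, borel_step hborel hi0 hi1 hβJ⟩
    · rw [degAdd, degSingle]
      have : (β - Finsupp.single i 1).degree + 1 = d := by
        have := degAdd (β - Finsupp.single i 1) (Finsupp.single i 1)
        rw [subSplit hi1, hβd, degSingle] at this
        omega
      omega
    · have hi0' : i ≠ (0 : Fin (n + 1)) := hi0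
      rw [Finsupp.add_apply, Finsupp.tsub_apply, Finsupp.single_eq_same,
        Finsupp.single_eq_of_ne' hi0', hβ0]
      omega

/-- key step in the proof of Theorem `equi`.
Let `k` be a field of characteristic 0, `S = k[x_0, …, x_n]`, `μ ≤ d` positive integers,
and `J ⊆ S` a Borel-fixed monomial ideal with `dim_k (S_d / J_d) = μ`.  Then
`J_d + x_0 · S_{d−1} = S_d`. -/
theorem borel_fixed_complement {k : Type*} [Field k] [CharZero k]
    {n μ d : ℕ} (hμ : 0 < μ) (hμd : μ ≤ d)
    (J : Ideal (MvPolynomial (Fin (n + 1)) k))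
    (hmono : IsMonomialIdeal J) (hborel : IsBorelFixed J)
    (hdim : Module.finrank k (quotComp (J.restrictScalars k) d) = μ) :
    (J.restrictScalars k ⊓ homogComp n k d) ⊔
        (homogComp n k (d - 1)).map
          (LinearMap.mulLeft k (X (0 : Fin (n + 1)) : MvPolynomial (Fin (n + 1)) k)) =
      homogComp n k d := by
  have hd : 1 ≤ d := le_trans hμ hμd
  -- Key claim: every degree-d monomial with x_0-exponent 0 lies in J
  have key : ∀ α : Fin (n + 1) →₀ ℕ, α.degree = d → α 0 = 0 → monomial α (1 : k) ∈ J := by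
    intro α hα h0
    by_contra hnot
    have hM : Module.Finite k (quotComp (J.restrictScalars k) d) :=
      Module.finite_of_finrank_pos (by rw [hdim]; exact hμ)
    -- choose the chain
    have hch := exists_chain hborel hα h0 hnot
    choose β hβd hβ0 hβJ using fun j : Fin (d + 1) => hch j (Nat.lt_succ_iff.mp j.isLt)
    -- the corresponding vectors in the quotient
    set F : Fin (d + 1) → homogComp n k d := fun j =>
      ⟨monomial (β j) (1 : k), isHomogeneous_monomial _ (hβd j)⟩ with hF
    set v : Fin (d + 1) → quotComp (J.restrictScalars k) d := fun j =>
      Submodule.Quotient.mk (F j) with hv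
    have hli : LinearIndependent k v := by
      rw [Fintype.linearIndependent_iff]
      intro g hg j0
      by_contra hg0
      have hsum : (∑ j, g j • F j : homogComp n k d) ∈
          (J.restrictScalars k).comap (homogComp n k d).subtype := by
        rw [← Submodule.Quotient.mk_eq_zero]
        refine Eq.trans ?_ hg
        simp only [hv, ← Submodule.mkQ_apply, map_sum, map_smul]
        rfl
      have hmem : (∑ j, g j • monomial (β j) (1 : k)) ∈ J := by
        have := hsum
        simp only [Submodule.mem_comap, Submodule.coe_subtype, Submodule.restrictScalars_mem]
          at this
        convert this using 1
        push_cast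
        rfl
      -- β is injective
      have hinj : Function.Injective β := fun a b hab => by
        have : (a : ℕ) = b := by rw [← hβ0 a, ← hβ0 b, hab]
        exact Fin.ext this
      -- coefficient of β j0 is g j0
      have hcoeff : coeff (β j0) (∑ j, g j • monomial (β j) (1 : k)) = g j0 := by
        rw [coeff_sum]
        rw [Finset.sum_eq_single j0]
        · simp [coeff_monomial]
        · intro b _ hb
          rw [coeff_smul, coeff_monomial, if_neg (fun h => hb (hinj h)), smul_zero]
        · simp
      have hsupp : β j0 ∈ (∑ j, g j • monomial (β j) (1 : k)).support := by
        rw [mem_support_iff, hcoeff]; exact hg0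
      exact hβJ j0 (hmono _ hmem _ hsupp)
    have hcard := hli.fintype_card_le_finrank
    rw [hdim, Fintype.card_fin] at hcard
    omega
  -- Now prove the equality of submodules
  apply le_antisymm
  · apply sup_le inf_le_right
    rintro p hp
    obtain ⟨q, hq, rfl⟩ := hp
    rw [LinearMap.mulLeft_apply]
    have hq' : (q : MvPolynomial (Fin (n + 1)) k).IsHomogeneous (d - 1) := hq
    have := (isHomogeneous_X k (0 : Fin (n + 1))).mul hq'
    rw [show 1 + (d - 1) = d by omega] at this
    exact this
  · intro p hp
    have hp' : p.IsHomogeneous d := hp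
    rw [← p.support_sum_monomial_coeff]
    apply Submodule.sum_mem
    intro α hα
    have hdeg : α.degree = d := by
      rw [Finsupp.degree_eq_weight_one]
      exact hp' (mem_support_iff.mp hα)
    rcases Nat.eq_zero_or_pos (α 0) with h0 | h0
    · -- the monomial is in J
      apply Submodule.mem_sup_left
      rw [Submodule.mem_inf]
      refine ⟨?_, isHomogeneous_monomial _ hdeg⟩
      show monomial α (coeff α p) ∈ J
      have : monomial α (coeff α p) = (coeff α p) • monomial α (1 : k) := by
        rw [smul_monomial, smul_eq_mul, mul_one]
      rw [this]
      exact (J.restrictScalars k).smul_mem _ (key α hdeg h0)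
    · -- the monomial is divisible by x_0
      apply Submodule.mem_sup_right
      refine ⟨monomial (α - Finsupp.single 0 1) (coeff α p), ?_, ?_⟩
      · apply isHomogeneous_monomial
        have := degAdd (α - Finsupp.single 0 1) (Finsupp.single 0 1)
        rw [subSplit h0, hdeg, degSingle] at this
        omega
      · rw [LinearMap.mulLeft_apply, ← pow_one (X (0 : Fin (n+1)) : MvPolynomial (Fin (n+1)) k),
          ← monomial_single_add]
        exact congrArg (fun s => (monomial s (coeff α p) : MvPolynomial (Fin (n + 1)) k))
          ((add_comm _ _).trans (subSplit h0))

end
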